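/- Polynomial covering bound for the normalized resistance metric: Let (G, μ, B) be a weighted graph with wired boundary, let h : ℕ → ℕ be strictly increasing with h(0) = 0 satisfying the doubling property with constants (β₁, β₂, C), and suppose Assumption A holds with constants (α, c₁, c₂, c₃). Set σ̄² := max_{x ∈ V} R_B(x,B) and γ := 2α/β₁. Then there exists a constant c′ > 0 depending only on (β₁, β₂, C, α, c₁, c₂, c₃) such that for every ε ∈ (0,1], the vertex set V can be covered by at most c′ ε^{−γ} sets of the form {y ∈ V : R_B(x,y)^{1/2} ≤ ε σ̄} with x ∈ V. -/

import Mathlib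

noncomputable section

/-- A weighted finite connected graph with a wired boundary. -/
structure WiredGraph where
  V : Type
  [fintypeV : Fintype V]
  [decEqV : DecidableEq V]
  G : SimpleGraph V
  conn : G.Connected
  nontriv : Nontrivial V
  mu : V → V → ℝ
  mu_symm : ∀ x y, mu x y = mu y x
  mu_nonneg : ∀ x y, 0 ≤ mu x y
  mu_pos_iff : ∀ x y, 0 < mu x y ↔ G.Adj x y
  B : Set V
  [decB : DecidablePred (· ∈ B)]
  B_nonempty : B.Nonempty
  B_ne_univ : B ≠ Set.univ
  compl_conn : (SimpleGraph.induce (Bᶜ : Set V) G).Connected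

attribute [instance] WiredGraph.fintypeV WiredGraph.decEqV WiredGraph.decB

open MeasureTheory ProbabilityTheory

namespace WiredGraph

variable (W : WiredGraph)

/-- Dirichlet energy of a function. -/
def energy (f : W.V → ℝ) : ℝ :=
  (1 / 2) * ∑ w : W.V, ∑ z : W.V, (f w - f z) ^ 2 * W.mu w z

/-- Wired effective resistance between two vertices. -/
def RB (x y : W.V) : ℝ :=
  if x = y then 0
  else if x ∈ W.B ∧ y ∈ W.B then 0
  else (sInf {e : ℝ | ∃ f : W.V → ℝ, f x = 1 ∧ f y = 0 ∧
        (∀ b ∈ W.B, ∀ b' ∈ W.B, f b = f b') ∧ e = W.energy f})⁻¹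

/-- Wired effective resistance from a vertex to the boundary. -/
def RBbd (x : W.V) : ℝ := W.RB x W.B_nonempty.choose

/-- The Dirichlet Laplacian. -/
def dirichletL : Matrix {x : W.V // x ∉ W.B} {x : W.V // x ∉ W.B} ℝ :=
  fun x y => if x = y then ∑ z : W.V, W.mu x.1 z else -W.mu x.1 y.1

/-- Covariance of the Gaussian free field: `L⁻¹` extended by `0` on the boundary. -/
def gffCov : W.V → W.V → ℝ := fun x y =>
  if hx : x ∈ W.B then 0 else if hy : y ∈ W.B then 0 else
    (W.dirichletL)⁻¹ ⟨x, hx⟩ ⟨y, hy⟩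

/-- Graph distance to the boundary. -/
def dB (x : W.V) : ℕ := sInf ((fun b => W.G.dist x b) '' W.B)

/-- Maximal graph distance to the boundary. -/
def dmax : ℕ := sSup (Set.range W.dB)

/-- Minimal number of closed graph-distance balls of radius `ε` needed to cover `V`. -/
def coverNum (ε : ℝ) : ℕ :=
  sInf {n : ℕ | ∃ s : Finset W.V, s.card = n ∧
    ∀ x : W.V, ∃ c ∈ s, (W.G.dist x c : ℝ) ≤ ε}

/-- Maximal variance of the GFF. -/
def sigmaSq : ℝ := ⨆ x : {x : W.V // x ∉ W.B}, W.gffCov x.1 x.1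

/-- Maximal standard deviation of the GFF. -/
def sigmaBar : ℝ := Real.sqrt W.sigmaSq

/-- Maximum of a field over all vertices. -/
def maxOf (x : W.V → ℝ) : ℝ := ⨆ z : W.V, x z

end WiredGraph

/-- Doubling property of `h` with constants `β₁ ≤ β₂` and `C`. -/
def Doubling (h : ℕ → ℕ) (β₁ β₂ C : ℝ) : Prop :=
  ∀ r R : ℕ, 0 < r → r ≤ R →
    C⁻¹ * ((R : ℝ) / r) ^ β₁ ≤ (h R : ℝ) / (h r) ∧
    (h R : ℝ) / (h r) ≤ C * ((R : ℝ) / r) ^ β₂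

/-- Assumption A with constants `α, c₁, c₂, c₃`. -/
def AssumptionA (W : WiredGraph) (h : ℕ → ℕ) (α c₁ c₂ c₃ : ℝ) : Prop :=
  (∀ x y : W.V, W.RB x y ≤ c₁ * h (W.G.dist x y)) ∧
  (c₂ * (⨆ x : W.V, (h (W.dB x) : ℝ)) ≤ ⨆ x : W.V, W.RBbd x) ∧
  (∀ δ : ℝ, 0 < δ → δ ≤ 1 → (W.coverNum (δ * W.dmax) : ℝ) ≤ c₃ * δ ^ (-α))

/-- A centered Gaussian random vector with covariance `Γ`, characterized through its
one-dimensional projections. -/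
def IsCenteredGaussianVec {ι : Type} [Fintype ι] (ν : Measure (ι → ℝ)) (Γ : ι → ι → ℝ) : Prop :=
  IsProbabilityMeasure ν ∧
    ∀ a : ι → ℝ,
      ν.map (fun x => ∑ i, a i * x i) =
        gaussianReal 0 (Real.toNNReal (∑ i, ∑ j, a i * a j * Γ i j))

/-- The Gaussian free field on a weighted graph with wired boundary. -/
def IsGFF (W : WiredGraph) (ν : Measure (W.V → ℝ)) : Prop :=
  IsCenteredGaussianVec ν W.gffCov

lemma WiredGraph.RB_nonneg (W : WiredGraph) (x y : W.V) : 0 ≤ W.RB x y := by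
  unfold WiredGraph.RB
  split_ifs with h1 h2
  · exact le_refl _
  · exact le_refl _
  · refine inv_nonneg.mpr (Real.sInf_nonneg ?_)
    rintro e ⟨f, -, -, -, rfl⟩
    unfold WiredGraph.energy
    apply mul_nonneg (by norm_num)
    refine Finset.sum_nonneg fun w _ => Finset.sum_nonneg fun z _ => ?_
    exact mul_nonneg (sq_nonneg _) (W.mu_nonneg w z)

/-- polynomial covering bound for the normalized resistance metric.
Under the doubling property of `h` and Assumption A, with `σ̄² = max_x R_B(x,B)` and
`γ = 2α/β₁`, there is a constant `c' > 0` depending only on the constants such that for every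
`ε ∈ (0,1]` the vertex set can be covered by at most `c' ε^{−γ}` sets of the form
`{y : R_B(x,y)^{1/2} ≤ ε σ̄}`. -/
theorem normalized_resistance_covering_bound
    (β₁ β₂ C α c₁ c₂ c₃ : ℝ)
    (hβ₁ : 0 < β₁) (hβ₁₂ : β₁ ≤ β₂) (hC : 0 < C)
    (hα : 0 < α) (hc₁ : 0 < c₁) (hc₂ : 0 < c₂) (hc₃ : 0 < c₃) :
    ∃ c' : ℝ, 0 < c' ∧
      ∀ (W : WiredGraph) (h : ℕ → ℕ),
        StrictMono h → h 0 = 0 → Doubling h β₁ β₂ C →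
        AssumptionA W h α c₁ c₂ c₃ →
        ∀ ε : ℝ, 0 < ε → ε ≤ 1 →
          ∃ s : Finset W.V, (s.card : ℝ) ≤ c' * ε ^ (-(2 * α / β₁)) ∧
            ∀ y : W.V, ∃ x ∈ s,
              Real.sqrt (W.RB x y) ≤ ε * Real.sqrt (⨆ z : W.V, W.RBbd z) := by

  classical
  set K := (c₁ * C / c₂) ^ (α / β₁) with hK
  refine ⟨c₃ * max 1 K, by positivity, ?_⟩
  intro W h hmono h0 hdoub hA ε hε hε1
  obtain ⟨hA1, hA2, hA3⟩ := hA
  haveI : Nonempty W.V := W.nontriv.to_nonempty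
  set S := ⨆ z : W.V, W.RBbd z with hS
  have hSnn : 0 ≤ S := Real.iSup_nonneg fun z => W.RB_nonneg _ _
  have hx0 : (0:ℝ) < c₂ * ε ^ 2 / (c₁ * C) := by positivity
  set θ := (c₂ * ε ^ 2 / (c₁ * C)) ^ (1 / β₁) with hθ
  have hθpos : 0 < θ := Real.rpow_pos_of_pos hx0 _
  set δ := min 1 θ with hδ
  have hδpos : 0 < δ := lt_min one_pos hθpos
  have hδ1 : δ ≤ 1 := min_le_left _ _
  have hcov := hA3 δ hδpos hδ1
  have hne : {n : ℕ | ∃ s : Finset W.V, s.card = n ∧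
      ∀ x : W.V, ∃ c ∈ s, (W.G.dist x c : ℝ) ≤ δ * W.dmax}.Nonempty := by
    refine ⟨Finset.univ.card, Finset.univ, rfl, fun x => ⟨x, Finset.mem_univ x, ?_⟩⟩
    rw [SimpleGraph.dist_self]
    push_cast
    positivity
  obtain ⟨s, hscard, hscov⟩ := Nat.sInf_mem hne
  -- the key exponent computation
  have hq1 : θ ^ (-α) = K * ε ^ (-(2 * α / β₁)) := by
    rw [hθ, ← Real.rpow_mul hx0.le,
      show (1 / β₁) * (-α) = -(α / β₁) by field_simp,
      Real.rpow_neg hx0.le, ← Real.inv_rpow hx0.le,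
      show (c₂ * ε ^ 2 / (c₁ * C))⁻¹ = (c₁ * C / c₂) * (ε ^ 2)⁻¹ by
        field_simp,
      Real.mul_rpow (by positivity) (by positivity), hK]
    congr 1
    rw [Real.inv_rpow (by positivity), ← Real.rpow_neg (by positivity),
      show (ε : ℝ) ^ 2 = ε ^ ((2:ℕ) : ℝ) from (Real.rpow_natCast ε 2).symm,
      ← Real.rpow_mul hε.le]
    norm_num
    ring_nf
  have hεpow : (1:ℝ) ≤ ε ^ (-(2 * α / β₁)) := by
    apply Real.one_le_rpow_of_pos_of_le_one_of_nonpos hε hε1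
    have : 0 ≤ 2 * α / β₁ := by positivity
    linarith
  have hεpow0 : (0:ℝ) ≤ ε ^ (-(2 * α / β₁)) := Real.rpow_nonneg hε.le _
  have hKnn : 0 ≤ K := by rw [hK]; positivity
  refine ⟨s, ?_, ?_⟩
  · -- cardinality bound
    have hδα : δ ^ (-α) ≤ max 1 K * ε ^ (-(2 * α / β₁)) := by
      rcases min_cases (1:ℝ) θ with ⟨hmin, -⟩ | ⟨hmin, -⟩
      · rw [hδ, hmin, Real.one_rpow]
        calc (1:ℝ) ≤ 1 * ε ^ (-(2 * α / β₁)) := by linarith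
        _ ≤ max 1 K * ε ^ (-(2 * α / β₁)) := by
            apply mul_le_mul_of_nonneg_right (le_max_left _ _) hεpow0
      · rw [hδ, hmin, hq1]
        exact mul_le_mul_of_nonneg_right (le_max_right _ _) hεpow0
    calc (s.card : ℝ) = (W.coverNum (δ * W.dmax) : ℝ) := by
          rw [hscard]; rfl
      _ ≤ c₃ * δ ^ (-α) := hcov
      _ ≤ c₃ * (max 1 K * ε ^ (-(2 * α / β₁))) :=
          mul_le_mul_of_nonneg_left hδα hc₃.le
      _ = c₃ * max 1 K * ε ^ (-(2 * α / β₁)) := by ring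
  · intro y
    obtain ⟨x, hxs, hxy⟩ := hscov y
    refine ⟨x, hxs, ?_⟩
    have hdle : (W.G.dist x y : ℝ) ≤ δ * W.dmax := by
      rw [SimpleGraph.dist_comm]; exact hxy
    have key : W.RB x y ≤ ε ^ 2 * S := by
      have hεS : (0:ℝ) ≤ ε ^ 2 * S := mul_nonneg (sq_nonneg ε) hSnn
      rcases Nat.eq_zero_or_pos (W.G.dist x y) with hd0 | hdpos
      · have h1 := hA1 x y
        rw [hd0, h0] at h1
        simpa using h1.trans (by simpa using hεS)
      · -- d ≥ 1
        have hdmnn : (0:ℝ) ≤ (W.dmax : ℝ) := Nat.cast_nonneg _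
        have hddm : W.G.dist x y ≤ W.dmax := by
          have : (W.G.dist x y : ℝ) ≤ (W.dmax : ℝ) := by
            refine hdle.trans ?_
            nlinarith
          exact_mod_cast this
        have hdmaxpos : 0 < W.dmax := lt_of_lt_of_le hdpos hddm
        set d := W.G.dist x y with hd
        have hhd_pos : (0:ℝ) < (h d : ℝ) := by
          have : h 0 < h d := hmono hdpos
          rw [h0] at this
          exact_mod_cast this
        set u := (d : ℝ) / (W.dmax : ℝ) with hu
        have hupos : 0 < u := by
          apply div_pos (by exact_mod_cast hdpos) (by exact_mod_cast hdmaxpos)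
        have huβpos : 0 < u ^ β₁ := Real.rpow_pos_of_pos hupos _
        have hdoub' := (hdoub d W.dmax hdpos hddm).1
        have hrat : ((W.dmax : ℝ) / d) ^ β₁ = (u ^ β₁)⁻¹ := by
          rw [show ((W.dmax : ℝ) / d) = u⁻¹ by rw [hu]; field_simp,
            Real.inv_rpow hupos.le]
        rw [hrat] at hdoub'
        have h1 : C⁻¹ * (u ^ β₁)⁻¹ * (h d : ℝ) ≤ (h W.dmax : ℝ) :=
          (le_div_iff₀ hhd_pos).mp hdoub'
        have h2 : (h d : ℝ) ≤ C * u ^ β₁ * (h W.dmax : ℝ) := by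
          calc (h d : ℝ) = (C * u ^ β₁) * (C⁻¹ * (u ^ β₁)⁻¹ * (h d : ℝ)) := by
                field_simp
            _ ≤ (C * u ^ β₁) * (h W.dmax : ℝ) :=
                mul_le_mul_of_nonneg_left h1 (by positivity)
        -- u^β₁ ≤ c₂ ε² / (c₁ C)
        have huδ : u ≤ δ := by
          rw [hu, div_le_iff₀ (by exact_mod_cast hdmaxpos)]
          rw [hd]
          linarith [hdle]
        have hθβ : θ ^ β₁ = c₂ * ε ^ 2 / (c₁ * C) := by
          rw [hθ, ← Real.rpow_mul hx0.le, one_div,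
            inv_mul_cancel₀ hβ₁.ne', Real.rpow_one]
        have huβ : u ^ β₁ ≤ c₂ * ε ^ 2 / (c₁ * C) := by
          rw [← hθβ]
          exact Real.rpow_le_rpow hupos.le (huδ.trans (min_le_right _ _)) hβ₁.le
        -- sup bounds
        set M := ⨆ x : W.V, (h (W.dB x) : ℝ) with hM
        have hdmM : (h W.dmax : ℝ) ≤ M := by
          have hrange : W.dmax ∈ Set.range W.dB := by
            rw [WiredGraph.dmax]
            exact (Set.range_nonempty W.dB).csSup_mem (Set.finite_range _)
          obtain ⟨x₀, hx₀⟩ := hrange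
          rw [← hx₀]
          exact le_ciSup (f := fun x : W.V => (h (W.dB x) : ℝ))
            (Set.Finite.bddAbove (Set.finite_range _)) x₀
        have hMS : M ≤ S / c₂ := by
          rw [le_div_iff₀ hc₂, mul_comm]
          exact hA2
        have hdmnn' : (0:ℝ) ≤ (h W.dmax : ℝ) := Nat.cast_nonneg _
        calc W.RB x y ≤ c₁ * (h d : ℝ) := hA1 x y
          _ ≤ c₁ * (C * u ^ β₁ * (h W.dmax : ℝ)) :=
              mul_le_mul_of_nonneg_left h2 hc₁.le
          _ ≤ c₁ * (C * (c₂ * ε ^ 2 / (c₁ * C)) * (S / c₂)) := by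
              apply mul_le_mul_of_nonneg_left _ hc₁.le
              exact mul_le_mul (mul_le_mul_of_nonneg_left huβ hC.le)
                (hdmM.trans hMS) hdmnn' (by positivity)
          _ = ε ^ 2 * S := by field_simp
    calc Real.sqrt (W.RB x y) ≤ Real.sqrt (ε ^ 2 * S) := Real.sqrt_le_sqrt key
      _ = ε * Real.sqrt S := by
          rw [Real.sqrt_mul (sq_nonneg ε), Real.sqrt_sq hε.le]
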